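/- For a class K of τ-algebras, the following are equivalent: (1) K is a variety of τ-algebras; (2) K = Mod(Th(K)); (3) K = K△▽ and K△ is a variety of infinitary clone τ-algebras. -/

import Mathlib

/-! ### τ-algebras (homogeneous type: every symbol of arity ω) -/

/-- `α` is a homomorphism of τ-algebras from `(A, FA)` to `(B, FB)`. -/
def IsAlgHom {τ A B : Type} (FA : τ → (ℕ → A) → A) (FB : τ → (ℕ → B) → B)
    (α : A → B) : Prop :=
  ∀ f s, α (FA f s) = FB f (fun i => α (s i))

/-! ### Infinitary clone τ-algebras -/

/-- The data of an infinitary clone τ-algebra on carrier `C`. -/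
structure CloneData (τ C : Type) where
  e : ℕ → C
  F : τ → C
  q : C → (ℕ → C) → C

/-- Axioms (N1)–(N3) of infinitary clone τ-algebras. -/
def IsCloneAlg {τ C : Type} (d : CloneData τ C) : Prop :=
  (∀ (i : ℕ) (s : ℕ → C), d.q (d.e i) s = s i) ∧
  (∀ x : C, d.q x d.e = x) ∧
  (∀ (x : C) (y z : ℕ → C), d.q (d.q x y) z = d.q x (fun i => d.q (y i) z))

/-- Homomorphisms of infinitary clone τ-algebras. -/
def IsCloneHom {τ C D : Type} (dC : CloneData τ C) (dD : CloneData τ D)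
    (α : C → D) : Prop :=
  (∀ i, α (dC.e i) = dD.e i) ∧
  (∀ f, α (dC.F f) = dD.F f) ∧
  (∀ x s, α (dC.q x s) = dD.q (α x) (fun i => α (s i)))

/-- Subuniverses of an infinitary clone τ-algebra. -/
def IsCloneSubuniv {τ C : Type} (d : CloneData τ C) (S : Set C) : Prop :=
  (∀ i, d.e i ∈ S) ∧ (∀ f, d.F f ∈ S) ∧
  (∀ (a : C) (s : ℕ → C), a ∈ S → (∀ i, s i ∈ S) → d.q a s ∈ S)

/-- The full functional infinitary clone τ-algebra `O^(ω)_A` on the value domain `(A, FA)`. -/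
def fullCloneData {τ : Type} (A : Type) (FA : τ → (ℕ → A) → A) :
    CloneData τ ((ℕ → A) → A) where
  e i := fun s => s i
  F f := FA f
  q g h := fun s => g (fun i => h i s)

/-- The τ-algebra `C↓` associated with an infinitary clone τ-algebra. -/
def downOp {τ C : Type} (d : CloneData τ C) : τ → (ℕ → C) → C :=
  fun f s => d.q (d.F f) s

/-- The clone structure induced on a subuniverse. -/
def subCloneData {τ C : Type} (d : CloneData τ C) {S : Set C}
    (h : IsCloneSubuniv d S) : CloneData τ S where
  e i := ⟨d.e i, h.1 i⟩
  F f := ⟨d.F f, h.2.1 f⟩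
  q a s := ⟨d.q a.1 (fun i => (s i).1), h.2.2 _ _ a.2 (fun i => (s i).2)⟩

/-! ### Terms -/

/-- τ-terms over the variables `e 0, e 1, …`. -/
inductive Term (τ : Type) : Type
  | e : ℕ → Term τ
  | app : τ → (ℕ → Term τ) → Term τ

/-- Term operation of a τ-term on the τ-algebra `(A, FA)`. -/
def Term.eval {τ A : Type} (FA : τ → (ℕ → A) → A) : Term τ → (ℕ → A) → A
  | .e i, s => s i
  | .app f t, s => FA f (fun i => (t i).eval FA s)

/-- Simultaneous substitution of terms for variables. -/
def Term.subst {τ : Type} : Term τ → (ℕ → Term τ) → Term τ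
  | .e i, u => u i
  | .app f t, u => .app f (fun i => (t i).subst u)

theorem Term.eval_subst {τ A : Type} (FA : τ → (ℕ → A) → A) :
    ∀ (t : Term τ) (u : ℕ → Term τ) (s : ℕ → A),
      (t.subst u).eval FA s = t.eval FA (fun i => (u i).eval FA s)
  | .e _, _, _ => rfl
  | .app f t, u, s => by
      simp only [Term.subst, Term.eval]
      congr 1
      funext i
      exact Term.eval_subst FA (t i) u s

/-- The initial infinitary clone τ-algebra `N_τ̄` on the set of τ-terms. -/
def initData (τ : Type) : CloneData τ (Term τ) where
  e := Term.e
  F f := Term.app f Term.e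
  q := Term.subst

/-- The term infinitary clone τ-algebra `A↑` (as a clone structure on the set
of term operations of `A`). -/
def upData {τ A : Type} (FA : τ → (ℕ → A) → A) :
    CloneData τ {g : (ℕ → A) → A // ∃ t : Term τ, g = Term.eval FA t} where
  e i := ⟨fun s => s i, ⟨Term.e i, rfl⟩⟩
  F f := ⟨FA f, ⟨Term.app f Term.e, by funext s; rfl⟩⟩
  q g h := ⟨fun s => g.1 (fun i => (h i).1 s), by
    obtain ⟨t, ht⟩ := g.2
    refine ⟨t.subst (fun i => (h i).2.choose), ?_⟩
    funext s
    rw [Term.eval_subst, ← ht]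
    exact congrArg _ (funext fun i => by rw [← (h i).2.choose_spec])⟩

/-! ### Bundled algebras, varieties -/

/-- A bundled τ-algebra. -/
structure Alg (τ : Type) : Type 1 where
  carrier : Type
  op : τ → (ℕ → carrier) → carrier

/-- Subuniverses of a τ-algebra. -/
def IsSubuniv {τ : Type} (A : Alg τ) (S : Set A.carrier) : Prop :=
  ∀ f s, (∀ i, s i ∈ S) → A.op f s ∈ S

/-- The subalgebra on a subuniverse. -/
def subAlg {τ : Type} (A : Alg τ) (S : Set A.carrier) (h : IsSubuniv A S) : Alg τ :=
  ⟨S, fun f s => ⟨A.op f (fun i => (s i).1), h f _ (fun i => (s i).2)⟩⟩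

/-- Product of τ-algebras, with componentwise operations. -/
def prodAlg {τ I : Type} (A : I → Alg τ) : Alg τ :=
  ⟨∀ i, (A i).carrier, fun f s i => (A i).op f (fun n => s n i)⟩

/-- Power of a τ-algebra. -/
def powAlg {τ : Type} (A : Alg τ) (I : Type) : Alg τ := prodAlg (fun _ : I => A)

/-- A variety: a class of τ-algebras closed under homomorphic images,
subalgebras (together with isomorphic copies), and arbitrary products. -/
def IsVariety {τ : Type} (K : Alg τ → Prop) : Prop :=
  (∀ A B : Alg τ, K A →
    (∃ α : A.carrier → B.carrier, Function.Surjective α ∧ IsAlgHom A.op B.op α) → K B) ∧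
  (∀ A B : Alg τ, K A →
    (∃ α : B.carrier → A.carrier, Function.Injective α ∧ IsAlgHom B.op A.op α) → K B) ∧
  (∀ (I : Type) (A : I → Alg τ), (∀ i, K (A i)) → K (prodAlg A))

/-- The subuniverse generated by a subset. -/
def gen {τ : Type} (A : Alg τ) (X : Set A.carrier) : Set A.carrier :=
  ⋂₀ {S | IsSubuniv A S ∧ X ⊆ S}

theorem gen_subuniv {τ : Type} (A : Alg τ) (X : Set A.carrier) :
    IsSubuniv A (gen A X) := by
  intro f s hs
  rw [gen, Set.mem_sInter]
  intro S hS
  exact hS.1 f s (fun i => Set.mem_sInter.1 (hs i) S hS)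

/-- The subalgebra generated by a subset. -/
def genSubalg {τ : Type} (A : Alg τ) (X : Set A.carrier) : Alg τ :=
  subAlg A (gen A X) (gen_subuniv A X)

/-! ### Bundled infinitary clone algebras -/

/-- A bundled infinitary clone τ-algebra. -/
structure CAlg (τ : Type) : Type 1 where
  carrier : Type
  data : CloneData τ carrier
  isClone : IsCloneAlg data

/-- Componentwise product of clone data. -/
def prodCloneData {τ I : Type} {C : I → Type} (d : ∀ i, CloneData τ (C i)) :
    CloneData τ (∀ i, C i) where
  e n := fun i => (d i).e n
  F f := fun i => (d i).F f
  q a s := fun i => (d i).q (a i) (fun n => s n i)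

theorem prodCloneData_isClone {τ I : Type} {C : I → Type} (d : ∀ i, CloneData τ (C i))
    (h : ∀ i, IsCloneAlg (d i)) : IsCloneAlg (prodCloneData d) := by
  refine ⟨?_, ?_, ?_⟩
  · intro n s; funext i; exact (h i).1 n (fun m => s m i)
  · intro x; funext i; exact (h i).2.1 (x i)
  · intro x y z; funext i; exact (h i).2.2 (x i) (fun n => y n i) (fun n => z n i)

/-- Product of infinitary clone τ-algebras. -/
def prodCAlg {τ I : Type} (Cs : I → CAlg τ) : CAlg τ :=
  ⟨∀ i, (Cs i).carrier, prodCloneData (fun i => (Cs i).data),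
    prodCloneData_isClone _ (fun i => (Cs i).isClone)⟩

/-- A variety of infinitary clone τ-algebras. -/
def IsCloneVariety {τ : Type} (H : CAlg τ → Prop) : Prop :=
  (∀ C D : CAlg τ, H C →
    (∃ α : C.carrier → D.carrier, Function.Surjective α ∧ IsCloneHom C.data D.data α) → H D) ∧
  (∀ C D : CAlg τ, H C →
    (∃ α : D.carrier → C.carrier, Function.Injective α ∧ IsCloneHom D.data C.data α) → H D) ∧
  (∀ (I : Type) (Cs : I → CAlg τ), (∀ i, H (Cs i)) → H (prodCAlg Cs))

/-! ### The operators △ and ▽ -/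

/-- `K△`: clone algebras isomorphic to a subalgebra of `O^(ω)_A` for some `A ∈ K`. -/
def Tri {τ : Type} (K : Alg τ → Prop) (D : CAlg τ) : Prop :=
  ∃ A : Alg τ, K A ∧ ∃ α : D.carrier → ((ℕ → A.carrier) → A.carrier),
    Function.Injective α ∧ IsCloneHom D.data (fullCloneData A.carrier A.op) α

/-- `H▽`: τ-algebras isomorphic to some `A` having a functional infinitary clone
τ-algebra on value domain `A` belonging to `H`. -/
def Nabla {τ : Type} (H : CAlg τ → Prop) (B : Alg τ) : Prop :=
  ∃ A : Alg τ,
    (∃ α : B.carrier → A.carrier, Function.Bijective α ∧ IsAlgHom B.op A.op α) ∧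
    ∃ D : CAlg τ, H D ∧ ∃ β : D.carrier → ((ℕ → A.carrier) → A.carrier),
      Function.Injective β ∧ IsCloneHom D.data (fullCloneData A.carrier A.op) β

/-! ### Equational theories -/

/-- The equational theory of a class of τ-algebras. -/
def ThK {τ : Type} (K : Alg τ → Prop) : Set (Term τ × Term τ) :=
  {p | ∀ A : Alg τ, K A → Term.eval A.op p.1 = Term.eval A.op p.2}

/-- The class of models of a set of identities. -/
def ModClass {τ : Type} (Sg : Set (Term τ × Term τ)) : Alg τ → Prop :=
  fun A => ∀ p ∈ Sg, Term.eval A.op p.1 = Term.eval A.op p.2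

/-! ### HSP -/

/-- `B` is a homomorphic image of a subalgebra of a power of `A`. -/
def InHSP {τ : Type} (A B : Alg τ) : Prop :=
  ∃ (I : Type) (S : Set (powAlg A I).carrier) (h : IsSubuniv (powAlg A I) S)
    (α : (subAlg (powAlg A I) S h).carrier → B.carrier),
    Function.Surjective α ∧ IsAlgHom (subAlg (powAlg A I) S h).op B.op α

/-- `B` is a homomorphic image of a subalgebra of a finite power of `A`. -/
def InHSPFin {τ : Type} (A B : Alg τ) : Prop :=
  ∃ (n : ℕ) (S : Set (powAlg A (Fin n)).carrier) (h : IsSubuniv (powAlg A (Fin n)) S)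
    (α : (subAlg (powAlg A (Fin n)) S h).carrier → B.carrier),
    Function.Surjective α ∧ IsAlgHom (subAlg (powAlg A (Fin n)) S h).op B.op α

/-! ### Finite dimensionality -/

/-- An ω-ary operation has finite dimension. -/
def FinDimOp {A : Type} (g : (ℕ → A) → A) : Prop :=
  ∃ n : ℕ, ∀ s u : ℕ → A, (∀ i < n, s i = u i) → g s = g u

/-- A τ-algebra is finite-dimensional if all its term operations have finite dimension. -/
def FinDimAlg {τ : Type} (A : Alg τ) : Prop :=
  ∀ t : Term τ, FinDimOp (Term.eval A.op t)


/-! ### Auxiliary lemmas -/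

namespace Stmt14Aux

variable {τ : Type}

theorem eval_hom {A B : Type} {FA : τ → (ℕ → A) → A} {FB : τ → (ℕ → B) → B}
    {α : A → B} (h : IsAlgHom FA FB α) :
    ∀ (t : Term τ) (s : ℕ → A), α (Term.eval FA t s) = Term.eval FB t (fun i => α (s i))
  | .e _, _ => rfl
  | .app f t, s => by
      simp only [Term.eval]
      rw [h f]
      congr 1
      funext i
      exact eval_hom h (t i) s

theorem eval_prod {I : Type} (A : I → Alg τ) :
    ∀ (t : Term τ) (s : ℕ → (prodAlg A).carrier) (i : I),
      Term.eval (prodAlg A).op t s i = Term.eval (A i).op t (fun n => s n i)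
  | .e _, _, _ => rfl
  | .app f t, s, i => by
      simp only [Term.eval]
      show (A i).op f _ = (A i).op f _
      congr 1
      funext n
      exact eval_prod A (t n) s i

theorem modclass_variety (Sg : Set (Term τ × Term τ)) : IsVariety (ModClass Sg) := by
  refine ⟨?_, ?_, ?_⟩
  · rintro A B hA ⟨α, hs, hh⟩ p hp
    funext s
    obtain ⟨s', hs'⟩ : ∃ s' : ℕ → A.carrier, ∀ i, α (s' i) = s i := by
      choose s' h using fun i => hs (s i); exact ⟨s', h⟩
    have e1 := eval_hom hh p.1 s'
    have e2 := eval_hom hh p.2 s'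
    have hfe : (fun i => α (s' i)) = s := funext hs'
    rw [hfe] at e1 e2
    rw [← e1, ← e2, hA p hp]
  · rintro A B hA ⟨α, hi, hh⟩ p hp
    funext s
    apply hi
    rw [eval_hom hh, eval_hom hh, hA p hp]
  · intro I A hA p hp
    funext s
    funext i
    rw [eval_prod, eval_prod, hA i p hp]

end Stmt14Aux
namespace Stmt14Aux
variable {τ : Type}

theorem threads (K : Alg τ → Prop) (hV : IsVariety K)
    (A : Alg τ) (E : (ℕ → A.carrier) → Set A.carrier)
    (hsub : ∀ s, IsSubuniv A (E s))
    (hne : ∀ s, (E s).Nonempty)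
    (hcov : ∀ a, ∃ s, a ∈ E s)
    (hdir : ∀ c : ℕ → (ℕ → A.carrier), ∃ s, ∀ n, E (c n) ⊆ E s)
    (hK : ∀ s, K (subAlg A (E s) (hsub s))) : K A := by
  classical
  set P := prodAlg (fun s : (ℕ → A.carrier) => subAlg A (E s) (hsub s)) with hPdef
  have hKP : K P := hV.2.2 _ _ hK
  set S : Set P.carrier :=
    {g | ∃ a s₀, a ∈ E s₀ ∧ ∀ s, E s₀ ⊆ E s → (g s).1 = a} with hSdef
  have hdir2 : ∀ s₀ s₁, ∃ s, E s₀ ⊆ E s ∧ E s₁ ⊆ E s := by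
    intro s₀ s₁
    obtain ⟨s, hs⟩ := hdir (fun n => if n = 0 then s₀ else s₁)
    refine ⟨s, ?_, ?_⟩
    · simpa using hs 0
    · simpa using hs 1
  have hSsub : IsSubuniv P S := by
    intro f t ht
    choose a s₀ ha hb using ht
    obtain ⟨s₁, hs₁⟩ := hdir s₀
    refine ⟨A.op f a, s₁, (hsub s₁) f a (fun i => hs₁ i (ha i)), ?_⟩
    intro s hs
    show (A.op f (fun i => ((t i) s).1)) = A.op f a
    congr 1
    funext i
    exact hb i s (fun x hx => hs (hs₁ i hx))
  set Q := subAlg P S hSsub with hQdef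
  have hKQ : K Q := hV.2.1 P Q hKP ⟨Subtype.val, Subtype.val_injective, fun f s => rfl⟩
  have key : ∀ (g : Q.carrier) (a : A.carrier) (s₀ : ℕ → A.carrier),
      a ∈ E s₀ → (∀ s, E s₀ ⊆ E s → (g.1 s).1 = a) → g.2.choose = a := by
    intro g a s₀ ha hg
    obtain ⟨s₀', ha', hg'⟩ := g.2.choose_spec
    obtain ⟨s, h1, h2⟩ := hdir2 s₀' s₀
    rw [← hg' s h1, hg s h2]
  refine hV.1 Q A hKQ ⟨fun g => g.2.choose, ?_, ?_⟩
  · intro b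
    obtain ⟨s₀, hb⟩ := hcov b
    refine ⟨⟨fun s => if h : b ∈ E s then ⟨b, h⟩ else ⟨(hne s).choose, (hne s).choose_spec⟩,
      b, s₀, hb, ?_⟩, ?_⟩
    · intro s hs
      show (dite _ _ _ : (subAlg A (E s) (hsub s)).carrier).1 = b
      erw [dif_pos (hs hb)]
    · refine key _ b s₀ hb ?_
      intro s hs
      show (dite _ _ _ : (subAlg A (E s) (hsub s)).carrier).1 = b
      erw [dif_pos (hs hb)]
  · intro f t
    choose a s₀ h1 h2 using fun i => (t i).2
    obtain ⟨s₁, hs₁⟩ := hdir s₀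
    have hmem : A.op f a ∈ E s₁ := (hsub s₁) f a fun i => hs₁ i (h1 i)
    have hw : ∀ s, E s₁ ⊆ E s → ((Q.op f t).1 s).1 = A.op f a := by
      intro s hs
      show A.op f (fun i => ((t i).1 s).1) = A.op f a
      congr 1
      funext i
      exact h2 i s fun x hx => hs (hs₁ i hx)
    show (Q.op f t).2.choose = A.op f (fun i => (t i).2.choose)
    rw [key (Q.op f t) (A.op f a) s₁ hmem hw]
    congr 1
    funext i
    exact (key (t i) (a i) (s₀ i) (h1 i) (h2 i)).symm

end Stmt14Aux
namespace Stmt14Aux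
variable {τ : Type}

def trivAlg (τ : Type) : Alg τ := prodAlg (fun e : Empty => (e.elim : Alg τ))

theorem trivAlg_mem {K : Alg τ → Prop} (hV : IsVariety K) : K (trivAlg τ) :=
  hV.2.2 Empty _ (fun e => e.elim)

theorem trivAlg_ne : Nonempty (trivAlg τ).carrier := ⟨fun e => e.elim⟩

theorem birkhoff (K : Alg τ → Prop) (hV : IsVariety K) :
    ∀ A, ModClass (ThK K) A → K A := by
  classical
  intro A hA
  have hBex : ∀ p : Term τ × Term τ, ∃ B : Alg τ, K B ∧ ∃ s : ℕ → B.carrier,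
      (Term.eval B.op p.1 s = Term.eval B.op p.2 s → p ∈ ThK K) := by
    intro p
    by_cases hp : p ∈ ThK K
    · exact ⟨trivAlg τ, trivAlg_mem hV, fun _ => trivAlg_ne.some, fun _ => hp⟩
    · have hex : ∃ B : Alg τ, K B ∧ Term.eval B.op p.1 ≠ Term.eval B.op p.2 := by
        by_contra hc
        push_neg at hc
        exact hp (fun B hB => hc B hB)
      obtain ⟨B, hB, hne⟩ := hex
      obtain ⟨s, hs⟩ := Function.ne_iff.1 hne
      exact ⟨B, hB, s, fun h => absurd h hs⟩
  choose B hBK s hBs using hBex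
  set Φ : Term τ → (prodAlg B).carrier := fun t p => Term.eval (B p).op t (s p) with hΦ
  have hΦapp : ∀ f t, Φ (Term.app f t) = (prodAlg B).op f (fun i => Φ (t i)) := fun f t => rfl
  have hΦkey : ∀ t u, Φ t = Φ u → Term.eval A.op t = Term.eval A.op u := by
    intro t u h
    exact hA (t, u) (hBs (t, u) (congrFun h (t, u)))
  have hFS : IsSubuniv (prodAlg B) (Set.range Φ) := by
    rintro f t ht
    choose u hu using ht
    refine ⟨Term.app f u, ?_⟩
    rw [hΦapp]
    congr 1
    funext i
    exact hu i
  set F := subAlg (prodAlg B) (Set.range Φ) hFS with hFdef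
  have hKF : K F :=
    hV.2.1 _ _ (hV.2.2 _ _ hBK) ⟨Subtype.val, Subtype.val_injective, fun f t => rfl⟩
  set E : (ℕ → A.carrier) → Set A.carrier :=
    fun s₀ => {a | ∃ t : Term τ, Term.eval A.op t s₀ = a} with hE
  have hEsub : ∀ s₀, IsSubuniv A (E s₀) := by
    intro s₀ f t ht
    choose u hu using ht
    refine ⟨Term.app f u, ?_⟩
    show A.op f (fun i => Term.eval A.op (u i) s₀) = A.op f t
    congr 1
    funext i
    exact hu i
  apply threads K hV A E hEsub
  · exact fun s₀ => ⟨s₀ 0, Term.e 0, rfl⟩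
  · exact fun a => ⟨fun _ => a, Term.e 0, rfl⟩
  · intro c
    refine ⟨fun m => c m.unpair.1 m.unpair.2, ?_⟩
    rintro n a ⟨t, ht⟩
    refine ⟨t.subst (fun i => Term.e (Nat.pair n i)), ?_⟩
    rw [Term.eval_subst, ← ht]
    refine congrArg _ (funext fun i => ?_)
    show (fun m => c m.unpair.1 m.unpair.2) (Nat.pair n i) = c n i
    simp
  · intro s₀
    have key2 : ∀ (x : F.carrier) (t : Term τ), Φ t = x.1 →
        Term.eval A.op x.2.choose s₀ = Term.eval A.op t s₀ := fun x t h =>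
      congrFun (hΦkey _ _ (x.2.choose_spec.trans h.symm)) s₀
    refine hV.1 F _ hKF
      ⟨fun x => ⟨Term.eval A.op x.2.choose s₀, x.2.choose, rfl⟩, ?_, ?_⟩
    · rintro ⟨a, t, ht⟩
      refine ⟨⟨Φ t, t, rfl⟩, Subtype.ext ?_⟩
      show Term.eval A.op (⟨Φ t, t, rfl⟩ : F.carrier).2.choose s₀ = a
      rw [key2 ⟨Φ t, t, rfl⟩ t rfl, ht]
    · intro f t
      apply Subtype.ext
      show Term.eval A.op (F.op f t).2.choose s₀
        = A.op f (fun i => Term.eval A.op (t i).2.choose s₀)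
      rw [key2 (F.op f t) (Term.app f (fun i => (t i).2.choose)) ?_]
      · show A.op f (fun i => Term.eval A.op ((t i).2.choose) s₀) = _
        rfl
      · rw [hΦapp]
        show (prodAlg B).op f _ = (F.op f t).1
        show (prodAlg B).op f _ = (prodAlg B).op f (fun i => (t i).1)
        congr 1
        funext i
        exact (t i).2.choose_spec

end Stmt14Aux
namespace Stmt14Aux
variable {τ : Type}

theorem part1 (K : Alg τ → Prop) : IsVariety K ↔ K = ModClass (ThK K) := by
  constructor
  · intro hV
    funext A
    exact propext ⟨fun hA p hp => hp A hA, birkhoff K hV A⟩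
  · intro h
    rw [h]
    exact modclass_variety _

theorem full_isClone (A : Type) (FA : τ → (ℕ → A) → A) :
    IsCloneAlg (fullCloneData A FA) :=
  ⟨fun _ _ => rfl, fun _ => rfl, fun _ _ _ => rfl⟩

theorem cloneHom_comp {C D E' : Type} {dC : CloneData τ C} {dD : CloneData τ D}
    {dE : CloneData τ E'} {α : C → D} {β : D → E'}
    (hα : IsCloneHom dC dD α) (hβ : IsCloneHom dD dE β) :
    IsCloneHom dC dE (fun x => β (α x)) := by
  refine ⟨fun i => ?_, fun f => ?_, fun x s => ?_⟩
  · show β (α (dC.e i)) = dE.e i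
    rw [hα.1, hβ.1]
  · show β (α (dC.F f)) = dE.F f
    rw [hα.2.1, hβ.2.1]
  · show β (α (dC.q x s)) = dE.q (β (α x)) fun i => β (α (s i))
    rw [hα.2.2, hβ.2.2]

theorem sub_isClone {C : Type} {d : CloneData τ C} (hd : IsCloneAlg d)
    {S : Set C} (h : IsCloneSubuniv d S) : IsCloneAlg (subCloneData d h) := by
  refine ⟨fun i s => Subtype.ext ?_, fun x => Subtype.ext ?_, fun x y z => Subtype.ext ?_⟩
  · exact hd.1 i _
  · exact hd.2.1 _
  · exact hd.2.2 _ _ _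

theorem sub_val_hom {C : Type} (d : CloneData τ C) {S : Set C} (h : IsCloneSubuniv d S) :
    IsCloneHom (subCloneData d h) d (Subtype.val) :=
  ⟨fun _ => rfl, fun _ => rfl, fun _ _ => rfl⟩

theorem range_subuniv {C D : Type} {dC : CloneData τ C} {dD : CloneData τ D}
    {ρ : C → D} (h : IsCloneHom dC dD ρ) : IsCloneSubuniv dD (Set.range ρ) := by
  refine ⟨fun i => ⟨dC.e i, h.1 i⟩, fun f => ⟨dC.F f, h.2.1 f⟩, ?_⟩
  rintro a s ⟨x, hx⟩ hs
  choose y hy using hs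
  refine ⟨dC.q x y, ?_⟩
  rw [h.2.2, hx]
  congr 1
  funext i
  exact hy i

theorem corestrict_hom {C D : Type} {dC : CloneData τ C} {dD : CloneData τ D}
    {ρ : C → D} (h : IsCloneHom dC dD ρ) :
    IsCloneHom dC (subCloneData dD (range_subuniv h)) (fun x => ⟨ρ x, x, rfl⟩) := by
  refine ⟨fun i => Subtype.ext (h.1 i), fun f => Subtype.ext (h.2.1 f),
    fun x s => Subtype.ext ?_⟩
  exact h.2.2 x s

theorem corestrict_surj {C D : Type} {dC : CloneData τ C} {dD : CloneData τ D}
    {ρ : C → D} (h : IsCloneHom dC dD ρ) :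
    Function.Surjective (fun x => (⟨ρ x, x, rfl⟩ : Set.range ρ)) := by
  rintro ⟨y, x, hx⟩
  exact ⟨x, Subtype.ext hx⟩

def downAlg (D : CAlg τ) : Alg τ := ⟨D.carrier, downOp D.data⟩

theorem rep_hom (D : CAlg τ) :
    IsCloneHom D.data (fullCloneData D.carrier (downOp D.data))
      (fun x s => D.data.q x s) := by
  refine ⟨fun i => funext fun s => D.isClone.1 i s, fun f => rfl,
    fun x s => funext fun v => D.isClone.2.2 x s v⟩

theorem rep_inj (D : CAlg τ) :
    Function.Injective (fun (x : D.carrier) (s : ℕ → D.carrier) => D.data.q x s) := by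
  intro x y h
  have h2 : D.data.q x D.data.e = D.data.q y D.data.e := congrFun h D.data.e
  rwa [D.isClone.2.1, D.isClone.2.1] at h2

theorem down_mem (K : Alg τ → Prop) (hV : IsVariety K) (D : CAlg τ)
    (hD : Tri K D) : K (downAlg D) := by
  obtain ⟨A, hA, γ, hγi, hγh⟩ := hD
  refine hV.2.1 (powAlg A (ℕ → A.carrier)) (downAlg D) (hV.2.2 _ _ fun _ => hA)
    ⟨γ, hγi, ?_⟩
  intro f s
  show γ (D.data.q (D.data.F f) s) = _
  erw [hγh.2.2, hγh.2.1]
  rfl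

end Stmt14Aux
namespace Stmt14Aux
variable {τ : Type}

theorem prodEmbed {I : Type} (A' : I → Alg τ) (hne : ∀ i, Nonempty ((A' i).carrier))
    (Cs : I → CAlg τ)
    (β : ∀ i, (Cs i).carrier → ((ℕ → (A' i).carrier) → (A' i).carrier))
    (hinj : ∀ i, Function.Injective (β i))
    (hhom : ∀ i, IsCloneHom (Cs i).data (fullCloneData _ (A' i).op) (β i)) :
    ∃ γ : (prodCAlg Cs).carrier → ((ℕ → (prodAlg A').carrier) → (prodAlg A').carrier),
      Function.Injective γ ∧
      IsCloneHom (prodCAlg Cs).data (fullCloneData _ (prodAlg A').op) γ := by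
  classical
  refine ⟨fun c s i => β i (c i) (fun n => s n i), ?_, ?_, ?_, ?_⟩
  · intro c c' h
    funext i
    apply hinj i
    funext t
    have h2 := congrFun (congrFun h
      (fun n => Function.update (fun j => Classical.choice (hne j)) i (t n))) i
    simpa [Function.update_self] using h2
  · intro n
    funext s
    funext i
    show β i ((Cs i).data.e n) (fun m => s m i) = s n i
    rw [(hhom i).1 n]
    rfl
  · intro f
    funext s
    funext i
    show β i ((Cs i).data.F f) (fun m => s m i) = (A' i).op f (fun n => s n i)
    rw [(hhom i).2.1 f]
    rfl
  · intro x y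
    funext v
    funext i
    show β i ((Cs i).data.q (x i) (fun n => y n i)) (fun m => v m i)
      = β i (x i) (fun n => β i (y n i) (fun m => v m i))
    rw [(hhom i).2.2]
    rfl

theorem tri_variety (K : Alg τ → Prop) (hV : IsVariety K) : IsCloneVariety (Tri K) := by
  refine ⟨?_, ?_, ?_⟩
  · rintro C D ⟨A, hA, γ, hγi, hγh⟩ ⟨φ, hφs, hφh⟩
    have hDC : K (downAlg D) := by
      refine hV.1 (downAlg C) (downAlg D) (down_mem K hV C ⟨A, hA, γ, hγi, hγh⟩)
        ⟨φ, hφs, fun f s => ?_⟩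
      show φ (C.data.q (C.data.F f) s) = D.data.q (D.data.F f) (fun i => φ (s i))
      erw [hφh.2.2, hφh.2.1]
    exact ⟨downAlg D, hDC, fun x s => D.data.q x s, rep_inj D, rep_hom D⟩
  · rintro C D ⟨A, hA, γ, hγi, hγh⟩ ⟨δ, hδi, hδh⟩
    exact ⟨A, hA, fun x => γ (δ x), hγi.comp hδi, cloneHom_comp hδh hγh⟩
  · intro I Cs hCs
    have h1 : ∀ i, ∃ A : Alg τ, K A ∧ Nonempty A.carrier ∧
        ∃ b : (Cs i).carrier → ((ℕ → A.carrier) → A.carrier),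
          Function.Injective b ∧ IsCloneHom (Cs i).data (fullCloneData _ A.op) b := by
      intro i
      obtain ⟨A, hA, γ, hγi, hγh⟩ := hCs i
      by_cases hne : Nonempty A.carrier
      · exact ⟨A, hA, hne, γ, hγi, hγh⟩
      · refine ⟨trivAlg τ, trivAlg_mem hV, trivAlg_ne,
          fun _ _ e => e.elim, ?_, ?_, ?_, ?_⟩
        · intro x y _
          apply hγi
          funext s
          exact absurd ⟨s 0⟩ hne
        · intro n; funext s; funext e; exact e.elim
        · intro f; funext s; funext e; exact e.elim
        · intro x s; funext v; funext e; exact e.elim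
    choose A' hK hne' β hβi hβh using h1
    obtain ⟨γ, hγi, hγh⟩ := prodEmbed A' hne' Cs β hβi hβh
    exact ⟨prodAlg A', hV.2.2 I A' hK, γ, hγi, hγh⟩

end Stmt14Aux
namespace Stmt14Aux
variable {τ : Type}

theorem nabla_tri (K : Alg τ → Prop) (hV : IsVariety K) : K = Nabla (Tri K) := by
  funext B
  refine propext ⟨?_, ?_⟩
  · intro hB
    exact ⟨B, ⟨id, Function.bijective_id, fun f s => rfl⟩,
      ⟨(ℕ → B.carrier) → B.carrier, fullCloneData _ B.op, full_isClone _ _⟩,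
      ⟨B, hB, id, Function.injective_id, fun i => rfl, fun f => rfl, fun x s => rfl⟩,
      id, Function.injective_id, fun i => rfl, fun f => rfl, fun x s => rfl⟩
  · rintro ⟨A, ⟨α, hαb, hαh⟩, D, hD, β, hβi, hβh⟩
    have hKA : K A := by
      set E : (ℕ → A.carrier) → Set A.carrier :=
        fun s₀ => Set.range (fun x => β x s₀) with hE
      have hEsub : ∀ s₀, IsSubuniv A (E s₀) := by
        intro s₀ f t ht
        choose x hx using ht
        refine ⟨D.data.q (D.data.F f) x, ?_⟩
        show β (D.data.q (D.data.F f) x) s₀ = A.op f t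
        rw [hβh.2.2, hβh.2.1]
        show A.op f (fun i => β (x i) s₀) = A.op f t
        congr 1
        funext i
        exact hx i
      apply threads K hV A E hEsub
      · intro s₀
        refine ⟨s₀ 0, D.data.e 0, ?_⟩
        show β (D.data.e 0) s₀ = s₀ 0
        rw [hβh.1]
        rfl
      · intro a
        refine ⟨fun _ => a, D.data.e 0, ?_⟩
        show β (D.data.e 0) (fun _ => a) = a
        rw [hβh.1]
        rfl
      · intro c
        refine ⟨fun m => c m.unpair.1 m.unpair.2, ?_⟩
        rintro n a ⟨x, hx⟩
        refine ⟨D.data.q x (fun i => D.data.e (Nat.pair n i)), ?_⟩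
        show β (D.data.q x (fun i => D.data.e (Nat.pair n i)))
          (fun m => c m.unpair.1 m.unpair.2) = a
        rw [hβh.2.2, ← hx]
        show β x (fun i => β (D.data.e (Nat.pair n i)) (fun m => c m.unpair.1 m.unpair.2))
          = β x (c n)
        congr 1
        funext i
        rw [hβh.1]
        show (fun m => c m.unpair.1 m.unpair.2) (Nat.pair n i) = c n i
        simp
      · intro s₀
        refine hV.1 (downAlg D) _ (down_mem K hV D hD)
          ⟨fun x => ⟨β x s₀, x, rfl⟩, ?_, ?_⟩
        · rintro ⟨a, x, hx⟩
          exact ⟨x, Subtype.ext hx⟩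
        · intro f t
          apply Subtype.ext
          show β (D.data.q (D.data.F f) t) s₀ = A.op f (fun i => β (t i) s₀)
          erw [hβh.2.2, hβh.2.1]
          rfl
    exact hV.2.1 A B hKA ⟨α, hαb.1, hαh⟩

end Stmt14Aux
namespace Stmt14Aux
variable {τ : Type}

def trivCAlg (τ : Type) : CAlg τ := prodCAlg (fun e : Empty => (e.elim : CAlg τ))

theorem trivCAlg_mem {H : CAlg τ → Prop} (hH : IsCloneVariety H) : H (trivCAlg τ) :=
  hH.2.2 Empty _ (fun e => e.elim)

theorem trivCAlg_sub : ∀ a b : (trivCAlg τ).carrier, a = b :=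
  fun _ _ => funext fun e => e.elim

theorem nabla_variety (H : CAlg τ → Prop) (hH : IsCloneVariety H) :
    IsVariety (Nabla H) := by
  classical
  refine ⟨?_, ?_, ?_⟩
  -- homomorphic images
  · rintro B B' ⟨A, ⟨α, hαb, hαh⟩, D, hD, β, hβi, hβh⟩ ⟨φ, hφs, hφh⟩
    obtain ⟨α', hα'⟩ : ∃ α' : A.carrier → B.carrier, ∀ a, α (α' a) = a :=
      ⟨Function.surjInv hαb.2, fun a => Function.surjInv_eq hαb.2 a⟩
    have hα'h : IsAlgHom A.op B.op α' := by
      intro f s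
      apply hαb.1
      rw [hα', hαh]
      congr 1
      funext i
      rw [hα']
    set ψ : A.carrier → B'.carrier := fun a => φ (α' a) with hψ
    have hψs : Function.Surjective ψ := by
      intro b'
      obtain ⟨b, hb⟩ := hφs b'
      refine ⟨α b, ?_⟩
      show φ (α' (α b)) = b'
      rw [hαb.1 (hα' (α b)), hb]
    have hψh : IsAlgHom A.op B'.op ψ := by
      intro f s
      show φ (α' (A.op f s)) = _
      rw [hα'h, hφh]
    set σ : B'.carrier → A.carrier := Function.surjInv hψs with hσ
    have hσψ : ∀ b, ψ (σ b) = b := fun b => Function.surjInv_eq hψs b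
    set Dψ : Set D.carrier :=
      {x | ∀ s u : ℕ → A.carrier, (∀ i, ψ (s i) = ψ (u i)) → ψ (β x s) = ψ (β x u)}
      with hDψ
    have hsub : IsCloneSubuniv D.data Dψ := by
      refine ⟨?_, ?_, ?_⟩
      · intro i s u h
        rw [hβh.1]
        exact h i
      · intro f s u h
        rw [hβh.2.1]
        show ψ (A.op f s) = ψ (A.op f u)
        rw [hψh, hψh]
        congr 1
        funext i
        exact h i
      · intro x y hx hy s u h
        rw [hβh.2.2]
        exact hx _ _ (fun i => hy i s u h)
    set DψC : CAlg τ := ⟨Dψ, subCloneData D.data hsub, sub_isClone D.isClone hsub⟩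
      with hDψC
    have hDψH : H DψC :=
      hH.2.1 D DψC hD ⟨Subtype.val, Subtype.val_injective, sub_val_hom D.data hsub⟩
    set ρ : DψC.carrier → ((ℕ → B'.carrier) → B'.carrier) :=
      fun x s => ψ (β x.1 (fun i => σ (s i))) with hρ
    have hρh : IsCloneHom DψC.data (fullCloneData B'.carrier B'.op) ρ := by
      refine ⟨?_, ?_, ?_⟩
      · intro i
        funext s
        show ψ (β (D.data.e i) (fun n => σ (s n))) = s i
        rw [hβh.1]
        exact hσψ (s i)
      · intro f
        funext s
        show ψ (β (D.data.F f) (fun n => σ (s n))) = B'.op f s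
        rw [hβh.2.1]
        show ψ (A.op f (fun n => σ (s n))) = B'.op f s
        rw [hψh]
        congr 1
        funext i
        exact hσψ (s i)
      · intro x y
        funext s
        show ψ (β (D.data.q x.1 (fun i => (y i).1)) (fun n => σ (s n)))
          = ψ (β x.1 (fun i => σ (ψ (β (y i).1 (fun n => σ (s n))))))
        rw [hβh.2.2]
        exact x.2 _ _ (fun i => (hσψ _).symm)
    refine ⟨B', ⟨id, Function.bijective_id, fun f s => rfl⟩,
      ⟨Set.range ρ, subCloneData (fullCloneData B'.carrier B'.op) (range_subuniv hρh),
        sub_isClone (full_isClone _ _) (range_subuniv hρh)⟩,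
      hH.1 DψC _ hDψH ⟨fun x => ⟨ρ x, x, rfl⟩, corestrict_surj hρh, corestrict_hom hρh⟩,
      Subtype.val, Subtype.val_injective,
      sub_val_hom (fullCloneData B'.carrier B'.op) (range_subuniv hρh)⟩
  -- subalgebras
  · rintro B B' ⟨A, ⟨α, hαb, hαh⟩, D, hD, β, hβi, hβh⟩ ⟨ι, hιi, hιh⟩
    set η : B'.carrier → A.carrier := fun b => α (ι b) with hη
    have hηi : Function.Injective η := hαb.1.comp hιi
    have hηh : IsAlgHom B'.op A.op η := by
      intro f s
      show α (ι (B'.op f s)) = _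
      rw [hιh, hαh]
    have hSsub : IsSubuniv A (Set.range η) := by
      intro f s hs
      choose b hb using hs
      refine ⟨B'.op f b, ?_⟩
      rw [hηh]
      show A.op f (fun i => η (b i)) = A.op f s
      congr 1
      funext i
      exact hb i
    set A₀ := subAlg A (Set.range η) hSsub with hA₀
    set DS : Set D.carrier :=
      {x | ∀ s : ℕ → A.carrier, (∀ i, s i ∈ Set.range η) → β x s ∈ Set.range η} with hDS
    have hsub : IsCloneSubuniv D.data DS := by
      refine ⟨?_, ?_, ?_⟩
      · intro i s hs
        rw [hβh.1]
        exact hs i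
      · intro f s hs
        rw [hβh.2.1]
        exact hSsub f s hs
      · intro x y hx hy s hs
        rw [hβh.2.2]
        exact hx _ (fun i => hy i s hs)
    set DSC : CAlg τ := ⟨DS, subCloneData D.data hsub, sub_isClone D.isClone hsub⟩
      with hDSC
    have hDSH : H DSC :=
      hH.2.1 D DSC hD ⟨Subtype.val, Subtype.val_injective, sub_val_hom D.data hsub⟩
    set ρ : DSC.carrier → ((ℕ → A₀.carrier) → A₀.carrier) :=
      fun x s => ⟨β x.1 (fun i => (s i).1), x.2 _ (fun i => (s i).2)⟩ with hρ
    have hρh : IsCloneHom DSC.data (fullCloneData A₀.carrier A₀.op) ρ := by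
      refine ⟨?_, ?_, ?_⟩
      · intro i
        funext s
        apply Subtype.ext
        show β (D.data.e i) (fun n => (s n).1) = (s i).1
        rw [hβh.1]
        rfl
      · intro f
        funext s
        apply Subtype.ext
        show β (D.data.F f) (fun n => (s n).1) = (A₀.op f s).1
        rw [hβh.2.1]
        rfl
      · intro x y
        funext s
        apply Subtype.ext
        show β (D.data.q x.1 (fun i => (y i).1)) (fun n => (s n).1)
          = β x.1 (fun i => β (y i).1 (fun n => (s n).1))
        rw [hβh.2.2]
        rfl
    refine ⟨A₀, ⟨fun b => ⟨η b, b, rfl⟩, ⟨?_, ?_⟩, ?_⟩,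
      ⟨Set.range ρ, subCloneData (fullCloneData A₀.carrier A₀.op) (range_subuniv hρh),
        sub_isClone (full_isClone _ _) (range_subuniv hρh)⟩,
      hH.1 DSC _ hDSH ⟨fun x => ⟨ρ x, x, rfl⟩, corestrict_surj hρh, corestrict_hom hρh⟩,
      Subtype.val, Subtype.val_injective,
      sub_val_hom (fullCloneData A₀.carrier A₀.op) (range_subuniv hρh)⟩
    · intro a b h
      exact hηi (congrArg Subtype.val h)
    · rintro ⟨a, b, hb⟩
      exact ⟨b, Subtype.ext hb⟩
    · intro f s
      apply Subtype.ext
      show η (B'.op f s) = A.op f (fun i => η (s i))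
      exact hηh f s
  -- products
  · intro I Bs hBs
    by_cases hne : Nonempty ((prodAlg Bs).carrier)
    · have h1 : ∀ i, ∃ A : Alg τ, Nonempty A.carrier ∧
          (∃ α : (Bs i).carrier → A.carrier,
            Function.Bijective α ∧ IsAlgHom (Bs i).op A.op α) ∧
          ∃ DC : CAlg τ, H DC ∧ ∃ b : DC.carrier → ((ℕ → A.carrier) → A.carrier),
            Function.Injective b ∧ IsCloneHom DC.data (fullCloneData _ A.op) b := by
        intro i
        obtain ⟨A, hiso, hrest⟩ := hBs i
        refine ⟨A, ?_, hiso, hrest⟩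
        obtain ⟨α, hαb, _⟩ := hiso
        obtain ⟨g⟩ := hne
        exact ⟨α (g i)⟩
      choose A' hne' hiso hcl using h1
      choose α hαb hαh using hiso
      choose DC hDC b hbi hbh using hcl
      obtain ⟨γ, hγi, hγh⟩ := prodEmbed A' hne' DC b hbi hbh
      refine ⟨prodAlg A', ⟨fun g i => α i (g i), ⟨?_, ?_⟩, ?_⟩,
        prodCAlg DC, hH.2.2 I DC hDC, γ, hγi, hγh⟩
      · intro g g' h
        funext i
        exact (hαb i).1 (congrFun h i)
      · intro g
        have h2 : ∀ i, ∃ x, α i x = g i := fun i => (hαb i).2 (g i)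
        choose x hx using h2
        exact ⟨x, funext hx⟩
      · intro f s
        funext i
        show α i ((Bs i).op f (fun n => s n i)) = _
        rw [hαh i]
        rfl
    · refine ⟨prodAlg Bs, ⟨id, Function.bijective_id, fun f s => rfl⟩,
        trivCAlg τ, trivCAlg_mem hH, fun _ s => s 0, ?_, ?_, ?_, ?_⟩
      · intro x y _
        exact trivCAlg_sub x y
      · intro i
        funext s
        exact absurd ⟨s 0⟩ hne
      · intro f
        funext s
        exact absurd ⟨s 0⟩ hne
      · intro x y
        funext s
        exact absurd ⟨s 0⟩ hne

end Stmt14Aux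
/-! ### Statement 14 -/

theorem stmt14 (τ : Type) (K : Alg τ → Prop) :
    (IsVariety K ↔ K = ModClass (ThK K)) ∧
    (IsVariety K ↔ (K = Nabla (Tri K) ∧ IsCloneVariety (Tri K))) := by
  refine ⟨Stmt14Aux.part1 K, ?_, ?_⟩
  · intro hV
    exact ⟨Stmt14Aux.nabla_tri K hV, Stmt14Aux.tri_variety K hV⟩
  · rintro ⟨hK, hV⟩
    rw [hK]
    exact Stmt14Aux.nabla_variety _ hV
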